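/- Assume the smallest CAV index satisfies i₁ ≥ 2 (the vehicle immediately behind the head vehicle is a human-driven vehicle). Then the pair (A, B) of the mixed-traffic system is not completely controllable; in fact, the controllability matrix [B, AB, …, A^{2n−1}B] has rank at most 2n − 2(i₁ − 1) < 2n. -/

import Mathlib

open Matrix

/-- The controllability matrix `[B, AB, …, A^{N−1}B]` of a pair `(A, B)`. -/
noncomputable def ctrbMat {N p : ℕ} (A : Matrix (Fin N) (Fin N) ℝ)
    (B : Matrix (Fin N) (Fin p) ℝ) : Matrix (Fin N) (Fin N × Fin p) ℝ :=
  Matrix.of fun r kj => (A ^ (kj.1 : ℕ) * B) r kj.2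

/-- The observability matrix `col(C, CA, …, CA^{N−1})` of a pair `(A, C)`. -/
noncomputable def obsvMat {N p : ℕ} (A : Matrix (Fin N) (Fin N) ℝ)
    (C : Matrix (Fin p) (Fin N) ℝ) : Matrix (Fin N × Fin p) (Fin N) ℝ :=
  Matrix.of fun kj c => (C * A ^ (kj.1 : ℕ)) kj.2 c

noncomputable def matP1 (α1 α2 : ℝ) : Matrix (Fin 2) (Fin 2) ℝ := !![0, -1; α1, -α2]
noncomputable def matP2 (α3 : ℝ) : Matrix (Fin 2) (Fin 2) ℝ := !![0, 1; 0, α3]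
noncomputable def matS1 : Matrix (Fin 2) (Fin 2) ℝ := !![(0:ℝ), -1; 0, 0]
noncomputable def matS2 : Matrix (Fin 2) (Fin 2) ℝ := !![(0:ℝ), 1; 0, 0]

def fin2 (k : ℕ) : Fin 2 := ⟨k % 2, Nat.mod_lt _ (by norm_num)⟩

/-- The mixed-traffic system matrix `A ∈ ℝ^{2n×2n}` (vehicles 0-indexed `0,…,n−1`;
the CAV locations are given by the strictly increasing map `ι : Fin m → Fin n`).
Block `(i,i)` is `S₁` if vehicle `i` is a CAV, `P₁` otherwise; block `(i,i−1)` is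
`S₂` if vehicle `i` is a CAV, `P₂` otherwise; all other blocks vanish. -/
noncomputable def trafficA (n m : ℕ) (ι : Fin m → Fin n) (α1 α2 α3 : ℝ) :
    Matrix (Fin (2 * n)) (Fin (2 * n)) ℝ :=
  Matrix.of fun r c =>
    if (r : ℕ) / 2 = (c : ℕ) / 2 then
      (if ∃ k, (ι k : ℕ) = (r : ℕ) / 2 then matS1 (fin2 r) (fin2 c)
       else matP1 α1 α2 (fin2 r) (fin2 c))
    else if (r : ℕ) / 2 = (c : ℕ) / 2 + 1 then
      (if ∃ k, (ι k : ℕ) = (r : ℕ) / 2 then matS2 (fin2 r) (fin2 c)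
       else matP2 α3 (fin2 r) (fin2 c))
    else 0

/-- The input matrix `B ∈ ℝ^{2n×m}`: the `k`-th column is the standard basis
vector whose nonzero entry sits at the (0-indexed) position `2·ι(k)+1`,
i.e. the velocity component of the `k`-th CAV. -/
noncomputable def trafficB (n m : ℕ) (ι : Fin m → Fin n) :
    Matrix (Fin (2 * n)) (Fin m) ℝ :=
  Matrix.of fun r k => if (r : ℕ) = 2 * (ι k : ℕ) + 1 then 1 else 0

/-- The output matrix `C ∈ ℝ^{(n+m)×2n}`: the first `n` rows pick out the velocity
errors of all vehicles, the last `m` rows pick out the spacing errors of the CAVs. -/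
noncomputable def trafficC (n m : ℕ) (ι : Fin m → Fin n) :
    Matrix (Fin (n + m)) (Fin (2 * n)) ℝ :=
  Matrix.of fun j c =>
    if h : (j : ℕ) < n then (if (c : ℕ) = 2 * (j : ℕ) + 1 then 1 else 0)
    else (if (c : ℕ) = 2 * (ι ⟨(j : ℕ) - n, by have := j.isLt; omega⟩ : ℕ) then 1 else 0)

/-- **Theorem 1(2), first part.** If the vehicle immediately behind the head vehicle
is an HDV (`i₁ ≥ 2`, i.e. `1 ≤ ι 0` in 0-indexed notation), then the mixed-traffic
pair `(A, B)` is not completely controllable: the controllability matrix has rank at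
most `2n − 2(i₁ − 1) < 2n`. (Here `(ι ⟨0, hm⟩ : ℕ) = i₁ − 1`.) -/
lemma traffic_pow_mul_B_row_zero (n m : ℕ) (hm : 1 ≤ m)
    (ι : Fin m → Fin n) (hmono : StrictMono ι) (α1 α2 α3 : ℝ) (k : ℕ) :
    ∀ (r : Fin (2 * n)) (j : Fin m), (r : ℕ) / 2 < (ι ⟨0, hm⟩ : ℕ) →
      ((trafficA n m ι α1 α2 α3) ^ k * trafficB n m ι) r j = 0 := by
  induction k with
  | zero =>
    intro r j hr
    have hle : (ι ⟨0, hm⟩ : ℕ) ≤ (ι j : ℕ) := by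
      exact_mod_cast hmono.monotone (by exact Fin.mk_le_of_le_val (Nat.zero_le _))
    rw [pow_zero, Matrix.one_mul, trafficB, Matrix.of_apply, if_neg]
    omega
  | succ k ih =>
    intro r j hr
    rw [pow_succ', Matrix.mul_assoc, Matrix.mul_apply]
    apply Finset.sum_eq_zero
    intro c _
    by_cases hc : (c : ℕ) / 2 < (ι ⟨0, hm⟩ : ℕ)
    · rw [ih c j hc, mul_zero]
    · have hA : trafficA n m ι α1 α2 α3 r c = 0 := by
        rw [trafficA, Matrix.of_apply, if_neg (by omega), if_neg (by omega)]
      rw [hA, zero_mul]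

theorem mixed_traffic_not_controllable_of_first_vehicle_HDV
    (n m : ℕ) (hn : 1 ≤ n) (hm : 1 ≤ m) (hmn : m ≤ n)
    (ι : Fin m → Fin n) (hmono : StrictMono ι)
    (α1 α2 α3 : ℝ) (hα1 : 0 < α1) (hα3 : 0 < α3) (hα23 : α3 < α2)
    (hfirst : 1 ≤ (ι ⟨0, hm⟩ : ℕ)) :
    (ctrbMat (trafficA n m ι α1 α2 α3) (trafficB n m ι)).rank
        ≤ 2 * n - 2 * (ι ⟨0, hm⟩ : ℕ) ∧
      2 * n - 2 * (ι ⟨0, hm⟩ : ℕ) < 2 * n := by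
  set i0 : ℕ := (ι ⟨0, hm⟩ : ℕ) with hi0
  have hi0n : i0 < n := (ι ⟨0, hm⟩).isLt
  constructor
  · set M := ctrbMat (trafficA n m ι α1 α2 α3) (trafficB n m ι) with hM
    set w : Fin (2 * n) → ℝ := fun r => if (r : ℕ) / 2 < i0 then 0 else 1 with hw
    have hfac : M = Matrix.diagonal w * M := by
      ext r kj
      rw [Matrix.diagonal_mul]
      by_cases hr : (r : ℕ) / 2 < i0
      · have : M r kj = 0 := by
          rw [hM]
          exact traffic_pow_mul_B_row_zero n m hm ι hmono α1 α2 α3 kj.1 r kj.2 hr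
        rw [this, mul_zero]
      · simp [hw, hr]
    calc M.rank ≤ (Matrix.diagonal w).rank := by
          conv_lhs => rw [hfac]
          exact Matrix.rank_mul_le_left _ _
      _ = Fintype.card {r : Fin (2 * n) // w r ≠ 0} := Matrix.rank_diagonal w
      _ ≤ 2 * n - 2 * i0 := by
          have hcard : Fintype.card {r : Fin (2 * n) // w r ≠ 0}
              = Fintype.card {r : Fin (2 * n) // (⟨2 * i0, by omega⟩ : Fin (2 * n)) ≤ r} := by
            apply Fintype.card_congr
            apply Equiv.subtypeEquivRight
            intro r
            constructor
            · intro h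
              have : ¬ ((r : ℕ) / 2 < i0) := by
                intro hlt; apply h; simp [hw, hlt]
              exact Fin.mk_le_of_le_val (by omega)
            · intro h
              have : 2 * i0 ≤ (r : ℕ) := h
              have : ¬ ((r : ℕ) / 2 < i0) := by omega
              simp [hw, this]
          have hc : Fintype.card {r : Fin (2 * n) // (⟨2 * i0, by omega⟩ : Fin (2 * n)) ≤ r}
              = Fintype.card (Set.Ici (⟨2 * i0, by omega⟩ : Fin (2 * n))) :=
            Fintype.card_congr (Equiv.subtypeEquivRight fun _ => Iff.rfl)
          rw [hcard, hc, Fintype.card_Ici, Fin.card_Ici]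
  · omega
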